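/- arXiv:2208.06406 — 3 statements merged into one kernel-verified Lean document; each statement's English description precedes it below -/
import Mathlib

section
/- If p : ℝ → ℝ is a probability density function (nonnegative, integrable with integral 1) that is everywhere positive and twice continuously differentiable, and the second derivative of log p is a constant κ, then κ < 0 and p is a Gaussian density, i.e., there exist μ ∈ ℝ and σ > 0 such that p(x) = (1/(σ√(2π))) exp(-(x-μ)²/(2σ²)) for all x. -/
open MeasureTheory Real

theorem stmt_0 (p : ℝ → ℝ) (κ : ℝ)
    (hnn : ∀ x, 0 ≤ p x) (hint : Integrable p)
    (hone : ∫ x, p x = 1)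
    (hpos : ∀ x, 0 < p x)
    (hsmooth : ContDiff ℝ 2 p)
    (hlog : ∀ x, deriv (deriv (fun y => Real.log (p y))) x = κ) :
    κ < 0 ∧ ∃ μ σ : ℝ, 0 < σ ∧
      ∀ x, p x = (σ * Real.sqrt (2 * π))⁻¹ * Real.exp (-(x - μ) ^ 2 / (2 * σ ^ 2)) := by
  set f : ℝ → ℝ := fun y => Real.log (p y) with hf_def
  have hf : ContDiff ℝ 2 f := hsmooth.log (fun x => (hpos x).ne')
  have hf' : ContDiff ℝ (1 + 1) f := by
    convert hf using 2
    exact one_add_one_eq_two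
  obtain ⟨hdf, -, hcd1⟩ := contDiff_succ_iff_deriv.mp hf'
  have hdf' : Differentiable ℝ (deriv f) := hcd1.differentiable one_ne_zero
  set b : ℝ := deriv f 0 with hb_def
  set c : ℝ := f 0 with hc_def
  -- step 1: deriv f x = κ * x + b
  have h1 : ∀ x, deriv f x = κ * x + b := by
    have hg : Differentiable ℝ (fun x => deriv f x - κ * x) :=
      hdf'.sub ((differentiable_id).const_mul κ)
    have hg0 : ∀ x, deriv (fun x => deriv f x - κ * x) x = 0 := by
      intro x
      have hd : HasDerivAt (fun x => deriv f x - κ * x) (deriv (deriv f) x - κ * 1) x :=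
        ((hdf' x).hasDerivAt).sub ((hasDerivAt_id x).const_mul κ)
      rw [hd.deriv, hlog x]; ring
    have := is_const_of_deriv_eq_zero hg hg0
    intro x
    have h := this x 0
    simp only [mul_zero, sub_zero] at h
    linarith [h]
  -- step 2: f x = κ/2 * x^2 + b * x + c
  have hq : ∀ x : ℝ, HasDerivAt (fun x : ℝ => κ / 2 * x ^ 2 + b * x) (κ * x + b) x := by
    intro x
    have h1' : HasDerivAt (fun x : ℝ => κ / 2 * x ^ 2 + b * x) (κ / 2 * ((2:ℕ) * x ^ (2 - 1)) + b * 1) x := ((hasDerivAt_pow 2 x).const_mul (κ / 2)).add ((hasDerivAt_id x).const_mul b)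
    convert h1' using 1
    ring
  have h2 : ∀ x, f x = κ / 2 * x ^ 2 + b * x + c := by
    have hqd : Differentiable ℝ (fun x : ℝ => κ / 2 * x ^ 2 + b * x) :=
      fun x => (hq x).differentiableAt
    have hg : Differentiable ℝ (fun x => f x - (κ / 2 * x ^ 2 + b * x)) := hdf.sub hqd
    have hg0 : ∀ x, deriv (fun x => f x - (κ / 2 * x ^ 2 + b * x)) x = 0 := by
      intro x
      rw [deriv_fun_sub (hdf x) (hqd x), (hq x).deriv, h1 x, sub_self]
    have := is_const_of_deriv_eq_zero hg hg0
    intro x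
    have h := this x 0
    simp only [ne_eq, OfNat.ofNat_ne_zero, not_false_eq_true, zero_pow, mul_zero, add_zero,
      sub_zero] at h
    linarith [h]
  have hp : ∀ x, p x = Real.exp (κ / 2 * x ^ 2 + b * x + c) := by
    intro x
    rw [← h2 x]
    exact (Real.exp_log (hpos x)).symm
  -- step 3: κ < 0
  have key : ∀ s : Set ℝ, MeasurableSet s → volume s = ⊤ →
      (∀ x ∈ s, Real.exp c ≤ p x) → False := by
    intro s hms hvs hbd
    have h1' : IntegrableOn (fun _ : ℝ => Real.exp c) s := by
      apply Integrable.mono' (hint.integrableOn) aestronglyMeasurable_const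
      filter_upwards [ae_restrict_mem hms] with x hx
      rw [Real.norm_eq_abs, abs_of_pos (Real.exp_pos c)]
      exact hbd x hx
    rw [integrableOn_const_iff] at h1'
    rcases h1' with h | h
    · exact (Real.exp_pos c).ne' (enorm_eq_zero.mp h)
    · rw [hvs] at h; exact lt_irrefl _ h
  have hκ : κ < 0 := by
    by_contra hκ
    push_neg at hκ
    rcases le_or_gt 0 b with hb | hb
    · refine key (Set.Ici 0) measurableSet_Ici Real.volume_Ici fun x hx => ?_
      rw [hp x]
      apply Real.exp_le_exp.mpr
      have hx0 : (0:ℝ) ≤ x := hx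
      nlinarith [sq_nonneg x]
    · refine key (Set.Iic 0) measurableSet_Iic Real.volume_Iic fun x hx => ?_
      rw [hp x]
      apply Real.exp_le_exp.mpr
      have hx0 : x ≤ (0:ℝ) := hx
      nlinarith [sq_nonneg x]
  refine ⟨hκ, ?_⟩
  set σ : ℝ := (Real.sqrt (-κ))⁻¹ with hσ_def
  have hσpos : 0 < σ := by
    apply inv_pos.mpr
    exact Real.sqrt_pos.mpr (by linarith)
  have hσ2 : σ ^ 2 = (-κ)⁻¹ := by
    rw [hσ_def, inv_pow, Real.sq_sqrt (by linarith : (0:ℝ) ≤ -κ)]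
  set μ : ℝ := -b / κ with hμ_def
  set A : ℝ := Real.exp (c - κ * μ ^ 2 / 2) with hA_def
  have hκne : κ ≠ 0 := hκ.ne
  have hpA : ∀ x, p x = A * Real.exp (-(x - μ) ^ 2 / (2 * σ ^ 2)) := by
    intro x
    rw [hp x, hA_def, ← Real.exp_add]
    congr 1
    rw [hσ2, hμ_def]
    field_simp
    ring
  -- compute the integral
  have hgauss : ∫ x : ℝ, Real.exp (-(x - μ) ^ 2 / (2 * σ ^ 2)) = σ * Real.sqrt (2 * π) := by
    have h0 : ∫ x : ℝ, Real.exp (-(x - μ) ^ 2 / (2 * σ ^ 2))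
        = ∫ x : ℝ, Real.exp (-(2 * σ ^ 2)⁻¹ * x ^ 2) := by
      rw [← integral_sub_right_eq_self (fun x => Real.exp (-(2 * σ ^ 2)⁻¹ * x ^ 2)) μ]
      congr 1
      funext x
      congr 1
      field_simp
    rw [h0, integral_gaussian]
    rw [show π / (2 * σ ^ 2)⁻¹ = σ ^ 2 * (2 * π) by field_simp]
    rw [Real.sqrt_mul (sq_nonneg σ), Real.sqrt_sq hσpos.le]
  have hintA : 1 = A * (σ * Real.sqrt (2 * π)) := by
    rw [← hone, ← hgauss, ← integral_const_mul]
    exact integral_congr_ae (Filter.Eventually.of_forall fun x => hpA x)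
  have hX : σ * Real.sqrt (2 * π) ≠ 0 := by
    apply ne_of_gt
    apply mul_pos hσpos
    exact Real.sqrt_pos.mpr (by positivity)
  have hAval : A = (σ * Real.sqrt (2 * π))⁻¹ :=
    eq_inv_of_mul_eq_one_right (by linarith [hintA] : (σ * Real.sqrt (2 * π)) * A = 1)
  exact ⟨μ, σ, hσpos, fun x => by rw [hpA x, hAval]⟩
end

section
/- Let Ω ⊆ ℝᵈ be open and connected, and let f : Ω → ℝᵈ be continuously differentiable with Df(x) ∈ O(d) (i.e., Df(x)ᵀ Df(x) = Id) for all x ∈ Ω. Then there exist R ∈ O(d) and b ∈ ℝᵈ such that f(x) = R x + b for all x ∈ Ω. -/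
open RealInnerProductSpace Metric Set

/-- A locally constant function on a preconnected set is constant. -/
theorem aux_locally_const {X α : Type*} [TopologicalSpace X] {g : X → α} {s : Set X}
    (hs : IsPreconnected s) (hloc : ∀ a ∈ s, ∀ᶠ x in nhds a, g x = g a)
    {a₀ : X} (ha₀ : a₀ ∈ s) : ∀ x ∈ s, g x = g a₀ := by
  have hps : PreconnectedSpace s := Subtype.preconnectedSpace hs
  set t : Set s := {x | g x = g a₀} with ht
  have hop : IsOpen t := by
    rw [isOpen_iff_mem_nhds]
    intro x hx
    have : {y : X | g y = g a₀} ∈ nhds (x : X) := by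
      filter_upwards [hloc x.1 x.2] with y hy
      rw [hy]; exact hx
    exact continuous_subtype_val.continuousAt.preimage_mem_nhds this
  have hcl : IsClosed t := by
    rw [← isOpen_compl_iff, isOpen_iff_mem_nhds]
    intro x hx
    have : {y : X | ¬ g y = g a₀} ∈ nhds (x : X) := by
      filter_upwards [hloc x.1 x.2] with y hy
      rw [hy]; exact hx
    exact continuous_subtype_val.continuousAt.preimage_mem_nhds this
  rcases isClopen_iff.1 ⟨hcl, hop⟩ with h | h
  · exfalso
    have hm : (⟨a₀, ha₀⟩ : s) ∈ t := rfl
    rw [h] at hm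
    exact hm
  · intro x hx
    have hm : (⟨x, hx⟩ : s) ∈ t := h ▸ mem_univ _
    exact hm

private noncomputable def oeq {d : ℕ}
    (T : EuclideanSpace ℝ (Fin d) →L[ℝ] EuclideanSpace ℝ (Fin d))
    (h : ∀ v, ‖T v‖ = ‖v‖) :
    EuclideanSpace ℝ (Fin d) ≃ₗᵢ[ℝ] EuclideanSpace ℝ (Fin d) :=
  LinearIsometry.toLinearIsometryEquiv ⟨T.toLinearMap, h⟩ rfl

private theorem oeq_apply {d : ℕ}
    (T : EuclideanSpace ℝ (Fin d) →L[ℝ] EuclideanSpace ℝ (Fin d))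
    (h : ∀ v, ‖T v‖ = ‖v‖) (v) : oeq T h v = T v := rfl

private theorem oeqC_coe {d : ℕ}
    (T : EuclideanSpace ℝ (Fin d) →L[ℝ] EuclideanSpace ℝ (Fin d))
    (h : ∀ v, ‖T v‖ = ‖v‖) :
    ((oeq T h).toContinuousLinearEquiv : EuclideanSpace ℝ (Fin d) →L[ℝ] EuclideanSpace ℝ (Fin d))
      = T :=
  ContinuousLinearMap.ext fun v => oeq_apply T h v

theorem stmt_1 {d : ℕ} (Ω : Set (EuclideanSpace ℝ (Fin d)))
    (hΩ : IsOpen Ω) (hconn : IsConnected Ω)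
    (f : EuclideanSpace ℝ (Fin d) → EuclideanSpace ℝ (Fin d))
    (f' : EuclideanSpace ℝ (Fin d) → EuclideanSpace ℝ (Fin d) →L[ℝ] EuclideanSpace ℝ (Fin d))
    (hderiv : ∀ x ∈ Ω, HasFDerivAt f (f' x) x)
    (hcont : ContinuousOn f' Ω)
    (horth : ∀ x ∈ Ω, ∀ v w, ⟪f' x v, f' x w⟫ = ⟪v, w⟫) :
    ∃ (R : EuclideanSpace ℝ (Fin d) →L[ℝ] EuclideanSpace ℝ (Fin d))
      (b : EuclideanSpace ℝ (Fin d)),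
      (∀ v w, ⟪R v, R w⟫ = ⟪v, w⟫) ∧ ∀ x ∈ Ω, f x = R x + b := by
  classical
  have hE : (EuclideanSpace ℝ (Fin d)) = EuclideanSpace ℝ (Fin d) := rfl
  obtain ⟨a₀, ha₀⟩ := hconn.nonempty
  -- basic norm facts
  have hnorm : ∀ x ∈ Ω, ∀ v, ‖f' x v‖ = ‖v‖ := by
    intro x hx v
    have h1 := horth x hx v v
    rw [real_inner_self_eq_norm_mul_norm, real_inner_self_eq_norm_mul_norm] at h1
    nlinarith [norm_nonneg (f' x v), norm_nonneg v]
  have hbound : ∀ x ∈ Ω, ‖f' x‖ ≤ 1 := fun x hx =>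
    ContinuousLinearMap.opNorm_le_bound _ zero_le_one fun v => by rw [hnorm x hx v, one_mul]
  have hstrict : ∀ x ∈ Ω, HasStrictFDerivAt f (f' x) x := fun x hx =>
    hasStrictFDerivAt_of_hasFDerivAt_of_continuousAt
      (Filter.eventually_of_mem (hΩ.mem_nhds hx) hderiv)
      (hcont.continuousAt (hΩ.mem_nhds hx))
  have hderiv' : ∀ x (hx : x ∈ Ω),
      HasFDerivAt f (((oeq (f' x) (hnorm x hx)).toContinuousLinearEquiv : EuclideanSpace ℝ (Fin d) →L[ℝ] EuclideanSpace ℝ (Fin d))) x := by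
    intro x hx
    rw [oeqC_coe]
    exact hderiv x hx
  -- Lipschitz upper bound on convex subsets of Ω
  have hupper : ∀ (s : Set (EuclideanSpace ℝ (Fin d))), Convex ℝ s → s ⊆ Ω → ∀ x ∈ s, ∀ y ∈ s,
      ‖f x - f y‖ ≤ ‖x - y‖ := by
    intro s hs hsΩ x hx y hy
    have := hs.norm_image_sub_le_of_norm_hasFDerivWithin_le
      (fun z hz => (hderiv z (hsΩ hz)).hasFDerivWithinAt)
      (fun z hz => hbound z (hsΩ hz)) hy hx
    simpa using this
  -- local isometry
  have hiso : ∀ a ∈ Ω, ∃ ε > 0, ball a ε ⊆ Ω ∧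
      ∀ x ∈ ball a ε, ∀ y ∈ ball a ε, ‖f x - f y‖ = ‖x - y‖ := by
    intro a ha
    have hstrict' : HasStrictFDerivAt f
        (((oeq (f' a) (hnorm a ha)).toContinuousLinearEquiv : EuclideanSpace ℝ (Fin d) →L[ℝ] EuclideanSpace ℝ (Fin d))) a := by
      rw [oeqC_coe]; exact hstrict a ha
    set P := hstrict'.toOpenPartialHomeomorph f with hP
    have hPcoe : ⇑P = f := hstrict'.toOpenPartialHomeomorph_coe
    have hasrc : a ∈ P.source := hstrict'.mem_toOpenPartialHomeomorph_source
    have hfatgt : f a ∈ P.target := by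
      have := P.map_source hasrc
      rwa [hPcoe] at this
    have hsymm_fa : P.symm (f a) = a := by
      have := P.left_inv hasrc
      rwa [hPcoe] at this
    -- choose δ
    have h1 : P.target ∈ nhds (f a) := P.open_target.mem_nhds hfatgt
    have h2 : ContinuousAt P.symm (f a) := P.continuousAt_symm hfatgt
    have h3 : P.symm ⁻¹' (Ω ∩ P.source) ∈ nhds (f a) := by
      apply h2.preimage_mem_nhds
      rw [hsymm_fa]
      exact (hΩ.inter P.open_source).mem_nhds ⟨ha, hasrc⟩
    obtain ⟨δ, hδ0, hδ⟩ := Metric.mem_nhds_iff.1 (Filter.inter_mem h1 h3)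
    -- inverse derivative bound on ball (f a) δ
    have hginv : ∀ y (hy : y ∈ ball (f a) δ),
        HasFDerivAt P.symm
          (((oeq (f' (P.symm y)) (hnorm _ (hδ hy).2.1)).toContinuousLinearEquiv.symm :
            EuclideanSpace ℝ (Fin d) →L[ℝ] EuclideanSpace ℝ (Fin d))) y := by
      intro y hy
      have hyt : y ∈ P.target := (hδ hy).1
      have hgyΩ : P.symm y ∈ Ω := (hδ hy).2.1
      refine HasFDerivAt.of_local_left_inverse (P.continuousAt_symm hyt) (hderiv' _ hgyΩ) ?_
      filter_upwards [P.eventually_right_inverse hyt] with y' hy'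
      rw [← hPcoe]; exact hy'
    have hgbound : ∀ y (hy : y ∈ ball (f a) δ),
        ‖(((oeq (f' (P.symm y)) (hnorm _ (hδ hy).2.1)).toContinuousLinearEquiv.symm :
            EuclideanSpace ℝ (Fin d) →L[ℝ] EuclideanSpace ℝ (Fin d)))‖ ≤ 1 := by
      intro y hy
      apply ContinuousLinearMap.opNorm_le_bound _ zero_le_one
      intro v
      rw [one_mul]
      exact le_of_eq ((oeq (f' (P.symm y)) (hnorm _ (hδ hy).2.1)).symm.norm_map v)
    have hglip : ∀ y₁ ∈ ball (f a) δ, ∀ y₂ ∈ ball (f a) δ,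
        ‖P.symm y₁ - P.symm y₂‖ ≤ ‖y₁ - y₂‖ := by
      intro y₁ hy₁ y₂ hy₂
      have := (convex_ball (f a) δ).norm_image_sub_le_of_norm_hasFDerivWithin_le
        (f' := fun y =>
          if hy : y ∈ ball (f a) δ then
            (((oeq (f' (P.symm y)) (hnorm _ (hδ hy).2.1)).toContinuousLinearEquiv.symm :
              EuclideanSpace ℝ (Fin d) →L[ℝ] EuclideanSpace ℝ (Fin d)))
          else 0)
        (fun z hz => by
          simpa only [dif_pos hz] using (hginv z hz).hasFDerivWithinAt)
        (fun z hz => by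
          simpa only [dif_pos hz] using hgbound z hz) hy₂ hy₁
      simpa using this
    -- choose ε
    have h4 : f ⁻¹' ball (f a) δ ∈ nhds a := by
      have hfc : ContinuousAt f a := (hderiv a ha).continuousAt
      exact hfc.preimage_mem_nhds (ball_mem_nhds _ hδ0)
    have h5 : (Ω ∩ P.source) ∩ f ⁻¹' ball (f a) δ ∈ nhds a :=
      Filter.inter_mem ((hΩ.inter P.open_source).mem_nhds ⟨ha, hasrc⟩) h4
    obtain ⟨ε, hε0, hε⟩ := Metric.mem_nhds_iff.1 h5
    refine ⟨ε, hε0, fun x hx => (hε hx).1.1, ?_⟩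
    intro x hx y hy
    have hxm := hε hx
    have hym := hε hy
    refine le_antisymm (hupper (ball a ε) (convex_ball a ε) (fun z hz => (hε hz).1.1) x hx y hy) ?_
    have hgx : P.symm (f x) = x := by
      have := P.left_inv hxm.1.2; rwa [hPcoe] at this
    have hgy : P.symm (f y) = y := by
      have := P.left_inv hym.1.2; rwa [hPcoe] at this
    calc ‖x - y‖ = ‖P.symm (f x) - P.symm (f y)‖ := by rw [hgx, hgy]
      _ ≤ ‖f x - f y‖ := hglip _ hxm.2 _ hym.2
  -- local constancy of f'
  have hlc : ∀ a ∈ Ω, ∀ᶠ x in nhds a, f' x = f' a := by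
    intro a ha
    obtain ⟨ε, hε0, hball, hisoeq⟩ := hiso a ha
    have key0 : ∀ y ∈ ball a ε, ∀ x ∈ ball a ε, ∀ v,
        ⟪f x - f y, f' x v⟫ = ⟪x - y, v⟫ := by
      intro y hy x hx v
      have hxΩ := hball hx
      have h1 : HasFDerivAt (fun z => f z - f y) (f' x) x := (hderiv x hxΩ).sub_const (f y)
      have h2 : HasFDerivAt (fun z : EuclideanSpace ℝ (Fin d) => z - y) (ContinuousLinearMap.id ℝ (EuclideanSpace ℝ (Fin d))) x :=
        (hasFDerivAt_id x).sub_const y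
      have hφ := (h1.inner ℝ h1).sub (h2.inner ℝ h2)
      have heq : (fun z => (⟪f z - f y, f z - f y⟫ : ℝ) - ⟪z - y, z - y⟫)
          =ᶠ[nhds x] (fun _ => (0 : ℝ)) := by
        filter_upwards [isOpen_ball.mem_nhds hx] with z hz
        have h3 := hisoeq z hz y hy
        rw [real_inner_self_eq_norm_mul_norm, real_inner_self_eq_norm_mul_norm, h3]
        ring
      have hzero : HasFDerivAt (fun z => (⟪f z - f y, f z - f y⟫ : ℝ) - ⟪z - y, z - y⟫)
          (0 : EuclideanSpace ℝ (Fin d) →L[ℝ] ℝ) x := (hasFDerivAt_const (0 : ℝ) x).congr_of_eventuallyEq heq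
      have hD := ContinuousLinearMap.ext_iff.1 (hφ.unique hzero) v
      simp only [ContinuousLinearMap.coe_sub', Pi.sub_apply, ContinuousLinearMap.coe_comp',
        Function.comp_apply, ContinuousLinearMap.prod_apply, fderivInnerCLM_apply,
        ContinuousLinearMap.coe_id', id_eq, ContinuousLinearMap.zero_apply] at hD
      have hc1 := real_inner_comm (f x - f y) (f' x v)
      have hc2 := real_inner_comm (x - y) v
      linarith
    have key2 : ∀ x ∈ ball a ε, ∀ y ∈ ball a ε, ∀ v w,
        ⟪f' y w, f' x v⟫ = ⟪w, v⟫ := by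
      intro x hx y hy v w
      have h1 := (hasFDerivAt_const (f x) y).sub (hderiv y (hball hy))
      have h2 : HasFDerivAt (fun z : EuclideanSpace ℝ (Fin d) => x - z) ((0 : EuclideanSpace ℝ (Fin d) →L[ℝ] EuclideanSpace ℝ (Fin d)) - ContinuousLinearMap.id ℝ (EuclideanSpace ℝ (Fin d))) y :=
        (hasFDerivAt_const x y).sub (hasFDerivAt_id y)
      have hψ := (h1.inner ℝ (hasFDerivAt_const (f' x v) y)).sub
        (h2.inner ℝ (hasFDerivAt_const v y))
      have heq : (fun z => (⟪f x - f z, f' x v⟫ : ℝ) - ⟪x - z, v⟫)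
          =ᶠ[nhds y] (fun _ => (0 : ℝ)) := by
        filter_upwards [isOpen_ball.mem_nhds hy] with z hz
        rw [key0 z hz x hx v]
        ring
      have hzero : HasFDerivAt (fun z => (⟪f x - f z, f' x v⟫ : ℝ) - ⟪x - z, v⟫)
          (0 : EuclideanSpace ℝ (Fin d) →L[ℝ] ℝ) y := (hasFDerivAt_const (0 : ℝ) y).congr_of_eventuallyEq heq
      have hD := ContinuousLinearMap.ext_iff.1 (hψ.unique hzero) w
      simp only [ContinuousLinearMap.coe_sub', Pi.sub_apply, ContinuousLinearMap.coe_comp',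
        Function.comp_apply, ContinuousLinearMap.prod_apply, fderivInnerCLM_apply,
        ContinuousLinearMap.neg_apply, ContinuousLinearMap.coe_id', id_eq,
        ContinuousLinearMap.zero_apply, inner_zero_right, inner_neg_left, zero_add, zero_sub,
        neg_neg, inner_zero_left] at hD
      linarith [real_inner_comm (f' y w) (f' x v), real_inner_comm w v, hD]
    filter_upwards [ball_mem_nhds a hε0] with x hx
    refine ContinuousLinearMap.ext fun v => ?_
    have hsurj : ∀ u : EuclideanSpace ℝ (Fin d), ∃ w, f' a w = u := fun u =>
      ⟨(oeq (f' a) (hnorm a ha)).symm u, by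
        have := (oeq (f' a) (hnorm a ha)).apply_symm_apply u
        rwa [oeq_apply] at this⟩
    have hz : ∀ u : EuclideanSpace ℝ (Fin d), ⟪f' x v - f' a v, u⟫ = 0 := by
      intro u
      obtain ⟨w, hw⟩ := hsurj u
      have e1 := key2 x hx a (mem_ball_self hε0) v w
      have e2 := horth a ha v w
      have c1 := real_inner_comm (f' x v) (f' a w)
      have c2 := real_inner_comm v w
      rw [← hw, inner_sub_left]
      linarith
    have hzz := hz (f' x v - f' a v)
    rwa [inner_self_eq_zero, sub_eq_zero] at hzz
  -- f' is globally constant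
  have hconstD : ∀ x ∈ Ω, f' x = f' a₀ := aux_locally_const hconn.isPreconnected hlc ha₀
  refine ⟨f' a₀, f a₀ - f' a₀ a₀, horth a₀ ha₀, ?_⟩
  have hlc2 : ∀ a ∈ Ω, ∀ᶠ x in nhds a,
      f x - f' a₀ x = f a - f' a₀ a := by
    intro a ha
    obtain ⟨ε, hε0, hball⟩ := Metric.isOpen_iff.1 hΩ a ha
    have hdev0 : ∀ z ∈ ball a ε,
        HasFDerivWithinAt (fun z => f z - f' a₀ z) (0 : EuclideanSpace ℝ (Fin d) →L[ℝ] EuclideanSpace ℝ (Fin d)) (ball a ε) z := by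
      intro z hz
      have h := (hderiv z (hball hz)).sub (f' a₀).hasFDerivAt
      rw [hconstD z (hball hz), sub_self] at h
      exact h.hasFDerivWithinAt
    filter_upwards [ball_mem_nhds a hε0] with x hx
    exact (convex_ball a ε).is_const_of_fderivWithin_eq_zero
      (fun z hz => (hdev0 z hz).differentiableWithinAt)
      (fun z hz => (hdev0 z hz).fderivWithin (isOpen_ball.uniqueDiffOn z hz))
      hx (mem_ball_self hε0)
  have hcst := aux_locally_const hconn.isPreconnected hlc2 ha₀
  intro x hx
  have h := hcst x hx
  rw [← h]
  abel
end

section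
/- Let R : ℝ₊ → O(d) be a continuously differentiable map into orthogonal matrices with det R(r) = 1 for all r, let a ∈ ℝᵈ, and define h(s) = R(|s−a|)(s−a) + a for s ≠ a. Then det Dh(s) = 1 for all s ≠ a. -/
open Matrix

/-- The radius-dependent rotation map `h(s) = R(|s-a|)(s-a) + a`. -/
noncomputable def radialRot {d : ℕ} (R : ℝ → Matrix (Fin d) (Fin d) ℝ)
    (a : Fin d → ℝ) (s : Fin d → ℝ) : Fin d → ℝ :=
  (R (Real.sqrt (∑ i, (s i - a i) ^ 2))).mulVec (s - a) + a

theorem stmt_7 {d : ℕ} (R R' : ℝ → Matrix (Fin d) (Fin d) ℝ) (a : Fin d → ℝ)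
    (horth : ∀ r > (0 : ℝ), (R r)ᵀ * R r = 1)
    (hdet : ∀ r > (0 : ℝ), (R r).det = 1)
    (hderiv : ∀ r > (0 : ℝ), ∀ i j : Fin d, HasDerivAt (fun t => R t i j) (R' r i j) r)
    (hcont : ∀ i j : Fin d, ContinuousOn (fun r => R' r i j) (Set.Ioi (0 : ℝ)))
    (s : Fin d → ℝ) (hs : s ≠ a) :
    LinearMap.det (fderiv ℝ (radialRot R a) s).toLinearMap = 1 := by
  classical
  have hq : (0:ℝ) < ∑ i, (s i - a i)^2 := by
    obtain ⟨i, hi⟩ : ∃ i, s i ≠ a i := by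
      by_contra h; push_neg at h; exact hs (funext h)
    refine Finset.sum_pos' (fun j _ => sq_nonneg _) ⟨i, Finset.mem_univ i, ?_⟩
    have : s i - a i ≠ 0 := sub_ne_zero.mpr hi
    positivity
  set r : ℝ := Real.sqrt (∑ i, (s i - a i)^2) with hrdef
  have hrpos : 0 < r := Real.sqrt_pos.mpr hq
  have hrsq : r ^ 2 = ∑ i, (s i - a i)^2 := Real.sq_sqrt hq.le
  -- gradient of the radius function
  set G : (Fin d → ℝ) →L[ℝ] ℝ :=
    ∑ j, ((s j - a j)/r) • (ContinuousLinearMap.proj j : (Fin d → ℝ) →L[ℝ] ℝ) with hGdef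
  have hGapp : ∀ w, G w = ∑ j, (s j - a j)/r * w j := by
    intro w
    simp [hGdef, ContinuousLinearMap.sum_apply]
  have hqder : HasFDerivAt (fun x : Fin d → ℝ => ∑ i, (x i - a i)^2)
      (∑ i, (2*(s i - a i)) • (ContinuousLinearMap.proj i : (Fin d → ℝ) →L[ℝ] ℝ)) s := by
    refine HasFDerivAt.fun_sum (fun i _ => ?_)
    have h0 : HasFDerivAt (fun x : Fin d → ℝ => x i - a i)
        (ContinuousLinearMap.proj i : (Fin d → ℝ) →L[ℝ] ℝ) s :=
      (hasFDerivAt_apply i s).sub_const (a i)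
    have heq : (fun x : Fin d → ℝ => (x i - a i)^2)
        = fun x => (x i - a i) * (x i - a i) := by
      funext x; ring
    rw [heq]
    refine (h0.mul h0).congr_fderiv ?_
    rw [two_mul, add_smul]
  have hnder : HasFDerivAt (fun x : Fin d → ℝ => Real.sqrt (∑ i, (x i - a i)^2)) G s := by
    have h1 := hqder.sqrt (ne_of_gt hq)
    refine h1.congr_fderiv ?_
    symm
    ext w
    simp only [hGdef, ContinuousLinearMap.sum_apply, ContinuousLinearMap.smul_apply,
      ContinuousLinearMap.proj_apply, smul_eq_mul, Finset.mul_sum, ← hrdef]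
    refine Finset.sum_congr rfl fun j _ => ?_
    field_simp
  -- entries of R along the radius
  have hRentry : ∀ i j, HasFDerivAt (fun x : Fin d → ℝ =>
      R (Real.sqrt (∑ k, (x k - a k)^2)) i j) ((R' r i j) • G) s := by
    intro i j
    exact (hderiv r hrpos i j).comp_hasFDerivAt s hnder
  set v : Fin d → ℝ := fun j => s j - a j with hvdef
  set u : Fin d → ℝ := (R' r) *ᵥ v with hudef
  set g : Fin d → ℝ := fun j => (s j - a j)/r with hgdef
  set M : Matrix (Fin d) (Fin d) ℝ := R r + Matrix.of (fun i j => u i * g j) with hMdef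
  set L : (Fin d → ℝ) →L[ℝ] (Fin d → ℝ) :=
    LinearMap.toContinuousLinearMap (Matrix.toLin' M) with hLdef
  have hL : HasFDerivAt (radialRot R a) L s := by
    apply hasFDerivAt_pi''
    intro i
    have hcomp : ∀ j, HasFDerivAt
        (fun x : Fin d → ℝ => R (Real.sqrt (∑ k, (x k - a k)^2)) i j * (x j - a j))
        ((R (Real.sqrt (∑ k, (s k - a k)^2)) i j) •
            (ContinuousLinearMap.proj j : (Fin d → ℝ) →L[ℝ] ℝ)
          + (s j - a j) • ((R' r i j) • G)) s := by
      intro j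
      exact (hRentry i j).mul ((hasFDerivAt_apply j s).sub_const (a j))
    have hsum := (HasFDerivAt.fun_sum (fun j (_ : j ∈ Finset.univ) => hcomp j)).add_const (a i)
    have heqf : (fun x : Fin d → ℝ =>
        (∑ j, R (Real.sqrt (∑ k, (x k - a k)^2)) i j * (x j - a j)) + a i)
        = fun x => radialRot R a x i := by
      funext x
      simp [radialRot, Matrix.mulVec, dotProduct]
    rw [heqf] at hsum
    convert hsum using 1
    ext w
    simp only [ContinuousLinearMap.comp_apply, ContinuousLinearMap.sum_apply,
      ContinuousLinearMap.add_apply, ContinuousLinearMap.smul_apply,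
      ContinuousLinearMap.proj_apply, smul_eq_mul, hLdef,
      LinearMap.coe_toContinuousLinearMap', Matrix.toLin'_apply]
    rw [Finset.sum_add_distrib]
    have : (M *ᵥ w) i = ∑ j, (R r i j * w j + u i * g j * w j) := by
      simp [hMdef, Matrix.mulVec, dotProduct, Matrix.add_apply, add_mul]
    rw [this, Finset.sum_add_distrib]
    congr 1
    have : ∑ j, u i * g j * w j = u i * G w := by
      rw [hGapp, Finset.mul_sum]
      exact Finset.sum_congr rfl fun j _ => by rw [hgdef]; ring
    rw [this]
    have hui : u i = ∑ j, R' r i j * (s j - a j) := by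
      simp [hudef, Matrix.mulVec, dotProduct, hvdef]
    rw [hui, Finset.sum_mul]
    exact Finset.sum_congr rfl fun j _ => by ring
  rw [hL.fderiv]
  have hdetL : LinearMap.det (L.toLinearMap) = M.det := by
    rw [hLdef]
    rw [LinearMap.coe_toContinuousLinearMap]
    exact LinearMap.det_toLin' M
  rw [hdetL]
  -- skew-symmetry of S = Rᵀ R'
  set S : Matrix (Fin d) (Fin d) ℝ := (R r)ᵀ * R' r with hSdef
  have hskewsum : ∀ i j, S i j + S j i = 0 := by
    intro i j
    have hprod : HasDerivAt (fun t => ∑ k, R t k i * R t k j)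
        (∑ k, (R' r k i * R r k j + R r k i * R' r k j)) r :=
      HasDerivAt.fun_sum (fun k _ => (hderiv r hrpos k i).mul (hderiv r hrpos k j))
    have hconst : HasDerivAt (fun t => ∑ k, R t k i * R t k j) 0 r := by
      have heq : (fun t => ∑ k, R t k i * R t k j) =ᶠ[nhds r]
          (fun _ => (1 : Matrix (Fin d) (Fin d) ℝ) i j) := by
        filter_upwards [Ioi_mem_nhds hrpos] with t ht
        have := horth t ht
        calc ∑ k, R t k i * R t k j = ((R t)ᵀ * R t) i j := by
              simp [Matrix.mul_apply, Matrix.transpose_apply]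
          _ = (1 : Matrix (Fin d) (Fin d) ℝ) i j := by rw [this]
      exact (hasDerivAt_const r _).congr_of_eventuallyEq heq
    have h0 := hprod.unique hconst
    have hsij : S i j = ∑ k, R r k i * R' r k j := by
      simp [hSdef, Matrix.mul_apply, Matrix.transpose_apply]
    have hsji : S j i = ∑ k, R r k j * R' r k i := by
      simp [hSdef, Matrix.mul_apply, Matrix.transpose_apply]
    rw [hsij, hsji, ← h0, ← Finset.sum_add_distrib]
    exact Finset.sum_congr rfl fun k _ => by ring
  have hquad : v ⬝ᵥ (S *ᵥ v) = 0 := by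
    have hST : Sᵀ = -S := by
      ext i j
      have := hskewsum j i
      simp [Matrix.transpose_apply, Matrix.neg_apply]
      linarith
    have h1 : v ⬝ᵥ (S *ᵥ v) = -(v ⬝ᵥ (S *ᵥ v)) := by
      calc v ⬝ᵥ (S *ᵥ v) = (v ᵥ* S) ⬝ᵥ v := Matrix.dotProduct_mulVec v S v
        _ = (-(S *ᵥ v)) ⬝ᵥ v := by rw [← Matrix.mulVec_transpose, hST, Matrix.neg_mulVec]
        _ = -(v ⬝ᵥ (S *ᵥ v)) := by rw [neg_dotProduct, dotProduct_comm]
    linarith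
  -- matrix determinant lemma
  have horth' : R r * (R r)ᵀ = 1 := mul_eq_one_comm.mp (horth r hrpos)
  set w : Fin d → ℝ := S *ᵥ v with hwdef
  have hM2 : M = R r * (1 + Matrix.replicateCol Unit w * Matrix.replicateRow Unit g) := by
    have hcu : R r * (Matrix.replicateCol Unit w * Matrix.replicateRow Unit g)
        = Matrix.of (fun i j => u i * g j) := by
      ext i j
      have hRw : R r *ᵥ w = u := by
        rw [hwdef, Matrix.mulVec_mulVec, hSdef, ← Matrix.mul_assoc, horth',
          Matrix.one_mul, hudef]
      calc (R r * (Matrix.replicateCol Unit w * Matrix.replicateRow Unit g)) i j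
          = ((R r * Matrix.replicateCol Unit w) * Matrix.replicateRow Unit g) i j := by
            rw [Matrix.mul_assoc]
        _ = (∑ k, R r i k * w k) * g j := by
            simp [Matrix.mul_apply, Matrix.replicateCol, Matrix.replicateRow, Finset.sum_mul]
        _ = u i * g j := by rw [← hRw]; simp [Matrix.mulVec, dotProduct]
    rw [Matrix.mul_add, Matrix.mul_one, hcu, hMdef]
  rw [hM2, Matrix.det_mul, hdet r hrpos, Matrix.det_one_add_replicateCol_mul_replicateRow, one_mul]
  have : g ⬝ᵥ w = r⁻¹ * (v ⬝ᵥ (S *ᵥ v)) := by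
    rw [hwdef]
    simp only [dotProduct, Finset.mul_sum]
    refine Finset.sum_congr rfl fun j _ => ?_
    rw [hgdef, hvdef]
    ring
  rw [this, hquad, mul_zero, add_zero]
end
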